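/- arXiv:2308.13251 — 2 statements merged into one kernel-verified Lean document; each statement's English description precedes it below -/
import Mathlib

section
/- Let H₁ and H₂ be two B-balanced realizations of the same third almost-regular partite 3-uniform hypergraph degree sequence D = (D_A, D_B, D_C). Then there exists a finite series of switch operations that transforms H₁ into H₂. -/
open Finset

variable {A B C : Type*} [Fintype A] [Fintype B] [Fintype C]
  [DecidableEq A] [DecidableEq B] [DecidableEq C]

/-- Degree of a vertex `a ∈ A` in a partite 3-uniform hypergraph with edge set `E`. -/
def hDegA (E : Finset (A × B × C)) (a : A) : ℕ := (E.filter fun e => e.1 = a).card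

/-- Degree of a vertex `b ∈ B`. -/
def hDegB (E : Finset (A × B × C)) (b : B) : ℕ := (E.filter fun e => e.2.1 = b).card

/-- Degree of a vertex `c ∈ C`. -/
def hDegC (E : Finset (A × B × C)) (c : C) : ℕ := (E.filter fun e => e.2.2 = c).card

/-- Multiplicity of the pair `(a,b)` in the `(A,B)`-projection of the hypergraph `E`. -/
def projAB (E : Finset (A × B × C)) (a : A) (b : B) : ℕ :=
  (E.filter fun e => e.1 = a ∧ e.2.1 = b).card

/-- The `(A,B)`-projection of `E` is `B`-balanced. -/
def BBalanced (E : Finset (A × B × C)) : Prop :=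
  ∀ b : B, ∃ l : ℕ, ∀ a : A, projAB E a b = l ∨ projAB E a b + 1 = l

/-- A single switch operation (in any one of the three vertex classes). -/
def IsSwitch (E E' : Finset (A × B × C)) : Prop :=
  (∃ a₁ a₂ b₁ c₁ b₂ c₂, (a₁, b₁, c₁) ∈ E ∧ (a₂, b₂, c₂) ∈ E ∧
    (a₂, b₁, c₁) ∉ E ∧ (a₁, b₂, c₂) ∉ E ∧
    E' = insert (a₂, b₁, c₁) (insert (a₁, b₂, c₂)
      ((E.erase (a₁, b₁, c₁)).erase (a₂, b₂, c₂)))) ∨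
  (∃ b₁ b₂ a₁ c₁ a₂ c₂, (a₁, b₁, c₁) ∈ E ∧ (a₂, b₂, c₂) ∈ E ∧
    (a₁, b₂, c₁) ∉ E ∧ (a₂, b₁, c₂) ∉ E ∧
    E' = insert (a₁, b₂, c₁) (insert (a₂, b₁, c₂)
      ((E.erase (a₁, b₁, c₁)).erase (a₂, b₂, c₂)))) ∨
  (∃ c₁ c₂ a₁ b₁ a₂ b₂, (a₁, b₁, c₁) ∈ E ∧ (a₂, b₂, c₂) ∈ E ∧
    (a₁, b₁, c₂) ∉ E ∧ (a₂, b₂, c₁) ∉ E ∧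
    E' = insert (a₁, b₁, c₂) (insert (a₂, b₂, c₁)
      ((E.erase (a₁, b₁, c₁)).erase (a₂, b₂, c₂))))

section Helpers
variable {α : Type*} [DecidableEq α]

lemma card_filter_insert (s : Finset α) (e : α) (p : α → Prop) [DecidablePred p] (h : e ∉ s) :
    ((insert e s).filter p).card = (s.filter p).card + (if p e then 1 else 0) := by
  rw [Finset.filter_insert]
  split_ifs with hp
  · rw [Finset.card_insert_of_notMem (fun hc => h (Finset.mem_of_mem_filter _ hc))]
  · simp

lemma card_filter_update (E : Finset α) (e₁ e₂ f₁ f₂ : α) (p : α → Prop) [DecidablePred p]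
    (he₁ : e₁ ∈ E) (he₂ : e₂ ∈ E) (hne : e₁ ≠ e₂) (hf₁ : f₁ ∉ E) (hf₂ : f₂ ∉ E) (hnf : f₁ ≠ f₂) :
    ((insert f₁ (insert f₂ ((E.erase e₁).erase e₂))).filter p).card
      + (if p e₁ then 1 else 0) + (if p e₂ then 1 else 0)
    = (E.filter p).card + (if p f₁ then 1 else 0) + (if p f₂ then 1 else 0) := by
  have h2 : e₂ ∈ E.erase e₁ := Finset.mem_erase.2 ⟨Ne.symm hne, he₂⟩
  have hE1 : E = insert e₁ (E.erase e₁) := (Finset.insert_erase he₁).symm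
  have hE2 : E.erase e₁ = insert e₂ ((E.erase e₁).erase e₂) := (Finset.insert_erase h2).symm
  have c1 : (E.filter p).card = ((E.erase e₁).filter p).card + (if p e₁ then 1 else 0) := by
    conv_lhs => rw [hE1]
    exact card_filter_insert _ _ _ (Finset.notMem_erase _ _)
  have c2 : ((E.erase e₁).filter p).card
      = (((E.erase e₁).erase e₂).filter p).card + (if p e₂ then 1 else 0) := by
    conv_lhs => rw [hE2]
    exact card_filter_insert _ _ _ (Finset.notMem_erase _ _)
  have hf₂' : f₂ ∉ (E.erase e₁).erase e₂ := fun hc => hf₂ (Finset.mem_of_mem_erase (Finset.mem_of_mem_erase hc))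
  have hf₁' : f₁ ∉ insert f₂ ((E.erase e₁).erase e₂) := by
    simp only [Finset.mem_insert]
    rintro (h | h)
    · exact hnf h
    · exact hf₁ (Finset.mem_of_mem_erase (Finset.mem_of_mem_erase h))
  have c3 := card_filter_insert ((E.erase e₁).erase e₂) f₂ p hf₂'
  have c4 := card_filter_insert (insert f₂ ((E.erase e₁).erase e₂)) f₁ p hf₁'
  omega

lemma update_facts (E E' : Finset α) (e₁ e₂ f₁ f₂ : α)
    (he₁ : e₁ ∈ E) (he₂ : e₂ ∈ E) (hne : e₁ ≠ e₂) (hf₁ : f₁ ∉ E) (hf₂ : f₂ ∉ E) (hnf : f₁ ≠ f₂)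
    (hE' : E' = insert f₁ (insert f₂ ((E.erase e₁).erase e₂))) :
    f₁ ∈ E' ∧ f₂ ∈ E' ∧ e₁ ∉ E' ∧ e₂ ∉ E' ∧
      E = insert e₁ (insert e₂ ((E'.erase f₁).erase f₂)) := by
  have h1 : e₁ ≠ f₁ := fun h => hf₁ (h ▸ he₁)
  have h2 : e₁ ≠ f₂ := fun h => hf₂ (h ▸ he₁)
  have h3 : e₂ ≠ f₁ := fun h => hf₁ (h ▸ he₂)
  have h4 : e₂ ≠ f₂ := fun h => hf₂ (h ▸ he₂)
  subst hE'
  refine ⟨by simp, by simp [hnf.symm], ?_, ?_, ?_⟩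
  · simp [Finset.mem_erase, h1, h2]
  · simp [Finset.mem_erase, h3, h4]
  · ext z
    simp only [Finset.mem_insert, Finset.mem_erase]
    by_cases hz1 : z = e₁ <;> by_cases hz2 : z = e₂ <;>
      by_cases hz3 : z = f₁ <;> by_cases hz4 : z = f₂ <;>
      simp_all

end Helpers



section Switch
variable {A B C : Type*} [Fintype A] [Fintype B] [Fintype C]
  [DecidableEq A] [DecidableEq B] [DecidableEq C]

/-- Decomposition of a switch into generic update data with coordinate pairings. -/
lemma switch_decomp {E E' : Finset (A × B × C)} (h : IsSwitch E E') :
    ∃ e₁ e₂ f₁ f₂ : A × B × C, e₁ ∈ E ∧ e₂ ∈ E ∧ e₁ ≠ e₂ ∧ f₁ ∉ E ∧ f₂ ∉ E ∧ f₁ ≠ f₂ ∧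
      E' = insert f₁ (insert f₂ ((E.erase e₁).erase e₂)) ∧
      ((e₁.1 = f₁.1 ∧ e₂.1 = f₂.1) ∨ (e₁.1 = f₂.1 ∧ e₂.1 = f₁.1)) ∧
      ((e₁.2.1 = f₁.2.1 ∧ e₂.2.1 = f₂.2.1) ∨ (e₁.2.1 = f₂.2.1 ∧ e₂.2.1 = f₁.2.1)) ∧
      ((e₁.2.2 = f₁.2.2 ∧ e₂.2.2 = f₂.2.2) ∨ (e₁.2.2 = f₂.2.2 ∧ e₂.2.2 = f₁.2.2)) := by
  rcases h with ⟨a₁,a₂,b₁,c₁,b₂,c₂,h1,h2,h3,h4,h5⟩ | ⟨b₁,b₂,a₁,c₁,a₂,c₂,h1,h2,h3,h4,h5⟩ |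
    ⟨c₁,c₂,a₁,b₁,a₂,b₂,h1,h2,h3,h4,h5⟩
  · refine ⟨(a₁,b₁,c₁),(a₂,b₂,c₂),(a₂,b₁,c₁),(a₁,b₂,c₂), h1, h2, ?_, h3, h4, ?_, h5, ?_, ?_, ?_⟩
    · rintro h; injection h with hA h'; injection h' with hB hC
      subst hA hB hC; exact h3 h1
    · rintro h; injection h with hA h'; injection h' with hB hC
      subst hA hB hC; exact h3 h1
    · right; exact ⟨rfl, rfl⟩
    · left; exact ⟨rfl, rfl⟩
    · left; exact ⟨rfl, rfl⟩
  · refine ⟨(a₁,b₁,c₁),(a₂,b₂,c₂),(a₁,b₂,c₁),(a₂,b₁,c₂), h1, h2, ?_, h3, h4, ?_, h5, ?_, ?_, ?_⟩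
    · rintro h; injection h with hA h'; injection h' with hB hC
      subst hA hB hC; exact h3 h1
    · rintro h; injection h with hA h'; injection h' with hB hC
      subst hA hB hC; exact h3 h1
    · left; exact ⟨rfl, rfl⟩
    · right; exact ⟨rfl, rfl⟩
    · left; exact ⟨rfl, rfl⟩
  · refine ⟨(a₁,b₁,c₁),(a₂,b₂,c₂),(a₁,b₁,c₂),(a₂,b₂,c₁), h1, h2, ?_, h3, h4, ?_, h5, ?_, ?_, ?_⟩
    · rintro h; injection h with hA h'; injection h' with hB hC
      subst hA hB hC; exact h3 h1
    · rintro h; injection h with hA h'; injection h' with hB hC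
      subst hA hB hC; exact h3 h1
    · left; exact ⟨rfl, rfl⟩
    · left; exact ⟨rfl, rfl⟩
    · right; exact ⟨rfl, rfl⟩
end Switch

section Switch2
variable {A B C : Type*} [Fintype A] [Fintype B] [Fintype C]
  [DecidableEq A] [DecidableEq B] [DecidableEq C]

lemma isSwitch_symm {E E' : Finset (A × B × C)} (h : IsSwitch E E') : IsSwitch E' E := by
  rcases h with ⟨a₁,a₂,b₁,c₁,b₂,c₂,h1,h2,h3,h4,h5⟩ | ⟨b₁,b₂,a₁,c₁,a₂,c₂,h1,h2,h3,h4,h5⟩ |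
    ⟨c₁,c₂,a₁,b₁,a₂,b₂,h1,h2,h3,h4,h5⟩
  · have hne : (a₁,b₁,c₁) ≠ ((a₂,b₂,c₂) : A × B × C) := by
      rintro h; injection h with hA h'; injection h' with hB hC
      subst hA hB hC; exact h3 h1
    have hnf : (a₂,b₁,c₁) ≠ ((a₁,b₂,c₂) : A × B × C) := by
      rintro h; injection h with hA h'; injection h' with hB hC
      subst hA hB hC; exact h3 h1
    obtain ⟨m1, m2, m3, m4, m5⟩ := update_facts E E' _ _ _ _ h1 h2 hne h3 h4 hnf h5
    exact Or.inl ⟨a₂, a₁, b₁, c₁, b₂, c₂, m1, m2, m3, m4, m5⟩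
  · have hne : (a₁,b₁,c₁) ≠ ((a₂,b₂,c₂) : A × B × C) := by
      rintro h; injection h with hA h'; injection h' with hB hC
      subst hA hB hC; exact h3 h1
    have hnf : (a₁,b₂,c₁) ≠ ((a₂,b₁,c₂) : A × B × C) := by
      rintro h; injection h with hA h'; injection h' with hB hC
      subst hA hB hC; exact h3 h1
    obtain ⟨m1, m2, m3, m4, m5⟩ := update_facts E E' _ _ _ _ h1 h2 hne h3 h4 hnf h5
    exact Or.inr (Or.inl ⟨b₂, b₁, a₁, c₁, a₂, c₂, m1, m2, m3, m4, m5⟩)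
  · have hne : (a₁,b₁,c₁) ≠ ((a₂,b₂,c₂) : A × B × C) := by
      rintro h; injection h with hA h'; injection h' with hB hC
      subst hA hB hC; exact h3 h1
    have hnf : (a₁,b₁,c₂) ≠ ((a₂,b₂,c₁) : A × B × C) := by
      rintro h; injection h with hA h'; injection h' with hB hC
      subst hA hB hC; exact h3 h1
    obtain ⟨m1, m2, m3, m4, m5⟩ := update_facts E E' _ _ _ _ h1 h2 hne h3 h4 hnf h5
    exact Or.inr (Or.inr ⟨c₂, c₁, a₁, b₁, a₂, b₂, m1, m2, m3, m4, m5⟩)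

lemma isSwitch_degA {E E' : Finset (A × B × C)} (h : IsSwitch E E') (a : A) :
    hDegA E' a = hDegA E a := by
  obtain ⟨e₁,e₂,f₁,f₂,he₁,he₂,hne,hf₁,hf₂,hnf,hE',hp,_,_⟩ := switch_decomp h
  have := card_filter_update E e₁ e₂ f₁ f₂ (fun e => e.1 = a) he₁ he₂ hne hf₁ hf₂ hnf
  rw [← hE'] at this
  unfold hDegA
  rcases hp with ⟨p1, p2⟩ | ⟨p1, p2⟩ <;> simp only [p1, p2] at this <;> omega

lemma isSwitch_degB {E E' : Finset (A × B × C)} (h : IsSwitch E E') (b : B) :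
    hDegB E' b = hDegB E b := by
  obtain ⟨e₁,e₂,f₁,f₂,he₁,he₂,hne,hf₁,hf₂,hnf,hE',_,hp,_⟩ := switch_decomp h
  have := card_filter_update E e₁ e₂ f₁ f₂ (fun e => e.2.1 = b) he₁ he₂ hne hf₁ hf₂ hnf
  rw [← hE'] at this
  unfold hDegB
  rcases hp with ⟨p1, p2⟩ | ⟨p1, p2⟩ <;> simp only [p1, p2] at this <;> omega

lemma isSwitch_degC {E E' : Finset (A × B × C)} (h : IsSwitch E E') (c : C) :
    hDegC E' c = hDegC E c := by
  obtain ⟨e₁,e₂,f₁,f₂,he₁,he₂,hne,hf₁,hf₂,hnf,hE',_,_,hp⟩ := switch_decomp h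
  have := card_filter_update E e₁ e₂ f₁ f₂ (fun e => e.2.2 = c) he₁ he₂ hne hf₁ hf₂ hnf
  rw [← hE'] at this
  unfold hDegC
  rcases hp with ⟨p1, p2⟩ | ⟨p1, p2⟩ <;> simp only [p1, p2] at this <;> omega

end Switch2

section Fibers
variable {A B C : Type*} [Fintype A] [Fintype B] [Fintype C]
  [DecidableEq A] [DecidableEq B] [DecidableEq C]

lemma projAB_eq_fiber (E : Finset (A × B × C)) (a : A) (b : B) :
    projAB E a b = (univ.filter fun c => (a, b, c) ∈ E).card := by
  unfold projAB
  apply Finset.card_nbij' (fun e => e.2.2) (fun c => (a, b, c))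
  · rintro ⟨x, y, z⟩ he
    simp only [Finset.mem_coe, Finset.mem_filter] at he
    obtain ⟨hE, h1, h2⟩ := he
    subst h1; subst h2
    simp only [Finset.mem_coe, Finset.mem_filter]
    exact ⟨Finset.mem_univ _, hE⟩
  · intro c hc
    simp only [Finset.mem_filter, Finset.mem_coe] at hc
    simp [hc.2]
  · rintro ⟨x, y, z⟩ he
    simp only [Finset.mem_coe, Finset.mem_filter] at he
    obtain ⟨hE, h1, h2⟩ := he
    subst h1; subst h2
    rfl
  · intro c hc; rfl

lemma exists_c_of_proj_lt (E : Finset (A × B × C)) (a a' : A) (b : B)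
    (h : projAB E a' b < projAB E a b) : ∃ c, (a, b, c) ∈ E ∧ (a', b, c) ∉ E := by
  by_contra hc
  push_neg at hc
  have hsub : (univ.filter fun c => (a, b, c) ∈ E) ⊆ (univ.filter fun c => (a', b, c) ∈ E) := by
    intro c hcm
    simp only [Finset.mem_filter] at hcm ⊢
    exact ⟨Finset.mem_univ _, hc c hcm.2⟩
  have := Finset.card_le_card hsub
  rw [projAB_eq_fiber, projAB_eq_fiber] at h
  omega

lemma exists_c_swap (M M' : Finset (A × B × C)) (a : A) (b : B) (c₁ : C)
    (hproj : projAB M a b = projAB M' a b) (h1 : (a, b, c₁) ∈ M) (h2 : (a, b, c₁) ∉ M') :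
    ∃ c₂, (a, b, c₂) ∈ M' ∧ (a, b, c₂) ∉ M := by
  by_contra hc
  push_neg at hc
  have hsub : (univ.filter fun c => (a, b, c) ∈ M') ⊆
      ((univ.filter fun c => (a, b, c) ∈ M).erase c₁) := by
    intro c hcm
    simp only [Finset.mem_filter, Finset.mem_erase] at hcm ⊢
    refine ⟨fun h => h2 (h ▸ hcm.2), Finset.mem_univ _, hc c hcm.2⟩
  have hcard := Finset.card_le_card hsub
  have hlt : ((univ.filter fun c => (a, b, c) ∈ M).erase c₁).card
      < (univ.filter fun c => (a, b, c) ∈ M).card := by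
    apply Finset.card_erase_lt_of_mem
    simp [h1]
  rw [projAB_eq_fiber, projAB_eq_fiber] at hproj
  omega

lemma hDegA_eq_sum (E : Finset (A × B × C)) (a : A) :
    hDegA E a = ∑ b : B, projAB E a b := by
  unfold hDegA projAB
  rw [Finset.card_eq_sum_card_fiberwise (f := fun e => e.2.1) (t := univ)
    (fun x _ => Finset.mem_univ _)]
  apply Finset.sum_congr rfl
  intro b _
  rw [Finset.filter_filter]

lemma hDegB_eq_sum (E : Finset (A × B × C)) (b : B) :
    hDegB E b = ∑ a : A, projAB E a b := by
  unfold hDegB projAB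
  rw [Finset.card_eq_sum_card_fiberwise (f := fun e => e.1) (t := univ)
    (fun x _ => Finset.mem_univ _)]
  apply Finset.sum_congr rfl
  intro a _
  rw [Finset.filter_filter]
  congr 1
  ext e
  simp [and_comm]

lemma hDegC_eq_sum_ind (E : Finset (A × B × C)) (c : C) :
    hDegC E c = ∑ x : A × B, (if (x.1, x.2, c) ∈ E then 1 else 0) := by
  unfold hDegC
  rw [Finset.card_eq_sum_card_fiberwise (f := fun e => (e.1, e.2.1)) (t := univ)
    (fun x _ => Finset.mem_univ _)]
  apply Finset.sum_congr rfl
  rintro ⟨xa, xb⟩ _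
  rw [Finset.filter_filter]
  split_ifs with hm
  · rw [Finset.card_eq_one]
    refine ⟨(xa, xb, c), ?_⟩
    ext ⟨ea, eb, ec⟩
    simp only [Finset.mem_filter, Finset.mem_singleton, Prod.mk.injEq]
    constructor
    · rintro ⟨he, h1, h2, h3⟩
      exact ⟨h2, h3, h1⟩
    · rintro ⟨rfl, rfl, rfl⟩
      exact ⟨hm, rfl, rfl, rfl⟩
  · rw [Finset.card_eq_zero]
    ext ⟨ea, eb, ec⟩
    simp only [Finset.mem_filter, Finset.notMem_empty, iff_false, Prod.mk.injEq]
    rintro ⟨he, h1, h2, h3⟩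
    subst h1; subst h2; subst h3
    exact hm he

lemma card_eq_sum_degC (E : Finset (A × B × C)) :
    E.card = ∑ c : C, hDegC E c := by
  have := Finset.card_eq_sum_card_fiberwise (s := E) (t := (univ : Finset C))
    (f := fun e => e.2.2) (fun x _ => Finset.mem_univ _)
  exact this

end Fibers

section Phase2
variable {A B C : Type*} [Fintype A] [Fintype B] [Fintype C]
  [DecidableEq A] [DecidableEq B] [DecidableEq C]

lemma isSwitch_card {E E' : Finset (A × B × C)} (h : IsSwitch E E') : E'.card = E.card := by
  obtain ⟨e₁,e₂,f₁,f₂,he₁,he₂,hne,hf₁,hf₂,hnf,hE',-,-,-⟩ := switch_decomp h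
  have := card_filter_update E e₁ e₂ f₁ f₂ (fun _ => True) he₁ he₂ hne hf₁ hf₂ hnf
  rw [← hE'] at this
  simpa using this

lemma phase2 (n : ℕ) : ∀ (H₁ H₂ : Finset (A × B × C)), (H₁ \ H₂).card = n →
    (∀ a b, projAB H₁ a b = projAB H₂ a b) → (∀ c, hDegC H₁ c = hDegC H₂ c) →
    Relation.ReflTransGen IsSwitch H₁ H₂ := by
  induction n using Nat.strong_induction_on with
  | _ n IH =>
  intro H₁ H₂ hn hproj hC
  have hcards : H₁.card = H₂.card := by
    rw [card_eq_sum_degC, card_eq_sum_degC]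
    exact Finset.sum_congr rfl fun c _ => hC c
  by_cases heq : H₁ = H₂
  · exact heq ▸ Relation.ReflTransGen.refl
  -- H₁ \ H₂ is nonempty
  have hne : (H₁ \ H₂).Nonempty := by
    rw [Finset.sdiff_nonempty]
    intro hsub
    exact heq (Finset.eq_of_subset_of_card_le hsub (le_of_eq hcards.symm))
  obtain ⟨⟨a, b, c₁⟩, he⟩ := hne
  rw [Finset.mem_sdiff] at he
  obtain ⟨c₂, hc₂₂, hc₂₁⟩ := exists_c_swap H₁ H₂ a b c₁ (hproj a b) he.1 he.2
  -- note: exists_c_swap M M' with M := H₂? careful; we want c₂ with (a,b,c₂) ∈ H₂ ∧ ∉ H₁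
  have hcc : c₁ ≠ c₂ := fun h => hc₂₁ (h ▸ he.1)
  -- the key dichotomy
  by_cases hopt : ∃ y : A × B,
      ((y.1, y.2, c₂) ∈ H₁ ∧ (y.1, y.2, c₁) ∉ H₁ ∧
        ¬((y.1, y.2, c₂) ∈ H₂ ∧ (y.1, y.2, c₁) ∉ H₂)) ∨
      ((y.1, y.2, c₁) ∈ H₂ ∧ (y.1, y.2, c₂) ∉ H₂ ∧
        ¬((y.1, y.2, c₁) ∈ H₁ ∧ (y.1, y.2, c₂) ∉ H₁))
  · obtain ⟨⟨ya, yb⟩, hy⟩ := hopt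
    rcases hy with ⟨hy1, hy2, hy3⟩ | ⟨hy1, hy2, hy3⟩
    · -- switch on H₁
      set H₁' := insert (a, b, c₂) (insert (ya, yb, c₁)
        ((H₁.erase (a, b, c₁)).erase (ya, yb, c₂))) with hH₁'
      have hsw : IsSwitch H₁ H₁' :=
        Or.inr (Or.inr ⟨c₁, c₂, a, b, ya, yb, he.1, hy1, hc₂₁, hy2, rfl⟩)
      have hne12 : ((a, b, c₁) : A × B × C) ≠ (ya, yb, c₂) := by
        rintro h; injection h with h1 h'; injection h' with h2 h3; exact hcc h3
      have hnf12 : ((a, b, c₂) : A × B × C) ≠ (ya, yb, c₁) := by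
        rintro h; injection h with h1 h'; injection h' with h2 h3; exact hcc h3.symm
      have hmeas : (H₁' \ H₂).card < (H₁ \ H₂).card := by
        have key := card_filter_update H₁ (a, b, c₁) (ya, yb, c₂) (a, b, c₂) (ya, yb, c₁)
          (fun e => e ∉ H₂) he.1 hy1 hne12 hc₂₁ hy2 hnf12
        rw [← hH₁', ← Finset.sdiff_eq_filter, ← Finset.sdiff_eq_filter] at key
        have h1 : ((a, b, c₁) : A × B × C) ∉ H₂ := he.2
        have h2 : ¬ ((a, b, c₂) : A × B × C) ∉ H₂ := fun h => h hc₂₂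
        have himp : ((ya, yb, c₁) : A × B × C) ∉ H₂ → ((ya, yb, c₂) : A × B × C) ∉ H₂ :=
          fun hq hmem => hy3 ⟨hmem, hq⟩
        split_ifs at key <;> first | omega | tauto
      have hproj' : ∀ a' b', projAB H₁' a' b' = projAB H₂ a' b' := by
        intro a' b'
        have := card_filter_update H₁ (a, b, c₁) (ya, yb, c₂) (a, b, c₂) (ya, yb, c₁)
          (fun e => e.1 = a' ∧ e.2.1 = b') he.1 hy1 hne12 hc₂₁ hy2 hnf12
        rw [← hH₁'] at this
        unfold projAB at *
        rw [← hproj a' b']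
        simp only at this
        omega
      have hC' : ∀ c, hDegC H₁' c = hDegC H₂ c := by
        intro c
        have := card_filter_update H₁ (a, b, c₁) (ya, yb, c₂) (a, b, c₂) (ya, yb, c₁)
          (fun e => e.2.2 = c) he.1 hy1 hne12 hc₂₁ hy2 hnf12
        rw [← hH₁'] at this
        unfold hDegC at *
        rw [← hC c]
        simp only at this
        omega
      exact Relation.ReflTransGen.head hsw
        (IH _ (hn ▸ hmeas) H₁' H₂ rfl hproj' hC')
    · -- switch on H₂
      set H₂' := insert (ya, yb, c₂) (insert (a, b, c₁)
        ((H₂.erase (ya, yb, c₁)).erase (a, b, c₂))) with hH₂'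
      have hsw : IsSwitch H₂ H₂' :=
        Or.inr (Or.inr ⟨c₁, c₂, ya, yb, a, b, hy1, hc₂₂, hy2, he.2, rfl⟩)
      have hne12 : ((ya, yb, c₁) : A × B × C) ≠ (a, b, c₂) := by
        rintro h; injection h with h1 h'; injection h' with h2 h3; exact hcc h3
      have hnf12 : ((ya, yb, c₂) : A × B × C) ≠ (a, b, c₁) := by
        rintro h; injection h with h1 h'; injection h' with h2 h3; exact hcc h3.symm
      have hcard' : H₂'.card = H₂.card := isSwitch_card hsw
      have hmeas : (H₁ \ H₂').card < (H₁ \ H₂).card := by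
        have key : (H₂' \ H₁).card < (H₂ \ H₁).card := by
          have key := card_filter_update H₂ (ya, yb, c₁) (a, b, c₂) (ya, yb, c₂) (a, b, c₁)
            (fun e => e ∉ H₁) hy1 hc₂₂ hne12 hy2 he.2 hnf12
          rw [← hH₂', ← Finset.sdiff_eq_filter, ← Finset.sdiff_eq_filter] at key
          have h1 : ((a, b, c₂) : A × B × C) ∉ H₁ := hc₂₁
          have h2 : ¬ ((a, b, c₁) : A × B × C) ∉ H₁ := fun h => h he.1
          have himp : ((ya, yb, c₂) : A × B × C) ∉ H₁ → ((ya, yb, c₁) : A × B × C) ∉ H₁ :=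
            fun hq hmem => hy3 ⟨hmem, hq⟩
          split_ifs at key <;> first | omega | tauto
        have e1 : (H₁ \ H₂').card = (H₂' \ H₁).card :=
          Finset.card_sdiff_comm (hcards.trans hcard'.symm)
        have e2 : (H₁ \ H₂).card = (H₂ \ H₁).card := Finset.card_sdiff_comm hcards
        omega
      have hproj' : ∀ a' b', projAB H₁ a' b' = projAB H₂' a' b' := by
        intro a' b'
        have := card_filter_update H₂ (ya, yb, c₁) (a, b, c₂) (ya, yb, c₂) (a, b, c₁)
          (fun e => e.1 = a' ∧ e.2.1 = b') hy1 hc₂₂ hne12 hy2 he.2 hnf12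
        rw [← hH₂'] at this
        unfold projAB at *
        rw [hproj a' b']
        simp only at this
        omega
      have hC' : ∀ c, hDegC H₁ c = hDegC H₂' c := by
        intro c
        have := card_filter_update H₂ (ya, yb, c₁) (a, b, c₂) (ya, yb, c₂) (a, b, c₁)
          (fun e => e.2.2 = c) hy1 hc₂₂ hne12 hy2 he.2 hnf12
        rw [← hH₂'] at this
        unfold hDegC at *
        rw [hC c]
        simp only at this
        omega
      exact Relation.ReflTransGen.tail
        (IH _ (hn ▸ hmeas) H₁ H₂' rfl hproj' hC') (isSwitch_symm hsw)
  · -- contradiction via counting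
    exfalso
    have h1 : ∀ y : A × B, (y.1, y.2, c₂) ∈ H₁ → (y.1, y.2, c₁) ∉ H₁ →
        ((y.1, y.2, c₂) ∈ H₂ ∧ (y.1, y.2, c₁) ∉ H₂) := fun y hm hn =>
      Classical.byContradiction fun hc => hopt ⟨y, Or.inl ⟨hm, hn, hc⟩⟩
    have h2 : ∀ y : A × B, (y.1, y.2, c₁) ∈ H₂ → (y.1, y.2, c₂) ∉ H₂ →
        ((y.1, y.2, c₁) ∈ H₁ ∧ (y.1, y.2, c₂) ∉ H₁) := fun y hm hn =>
      Classical.byContradiction fun hc => hopt ⟨y, Or.inr ⟨hm, hn, hc⟩⟩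
    classical
    set Pm := univ.filter (fun x : A × B => (x.1, x.2, c₂) ∈ H₁ ∧ (x.1, x.2, c₁) ∉ H₁) with hPm
    set Nm := univ.filter (fun x : A × B => (x.1, x.2, c₁) ∈ H₁ ∧ (x.1, x.2, c₂) ∉ H₁) with hNm
    set Pm' := univ.filter (fun x : A × B => (x.1, x.2, c₂) ∈ H₂ ∧ (x.1, x.2, c₁) ∉ H₂) with hPm'
    set Nm' := univ.filter (fun x : A × B => (x.1, x.2, c₁) ∈ H₂ ∧ (x.1, x.2, c₂) ∉ H₂) with hNm'
    have id1 : Pm.card + hDegC H₁ c₁ = Nm.card + hDegC H₁ c₂ := by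
      rw [hDegC_eq_sum_ind, hDegC_eq_sum_ind, hPm, hNm,
        Finset.card_filter, Finset.card_filter, ← Finset.sum_add_distrib,
        ← Finset.sum_add_distrib]
      apply Finset.sum_congr rfl
      intro x _
      by_cases hx1 : (x.1, x.2, c₁) ∈ H₁ <;> by_cases hx2 : (x.1, x.2, c₂) ∈ H₁ <;>
        simp [hx1, hx2]
    have id2 : Pm'.card + hDegC H₂ c₁ = Nm'.card + hDegC H₂ c₂ := by
      rw [hDegC_eq_sum_ind, hDegC_eq_sum_ind, hPm', hNm',
        Finset.card_filter, Finset.card_filter, ← Finset.sum_add_distrib,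
        ← Finset.sum_add_distrib]
      apply Finset.sum_congr rfl
      intro x _
      by_cases hx1 : (x.1, x.2, c₁) ∈ H₂ <;> by_cases hx2 : (x.1, x.2, c₂) ∈ H₂ <;>
        simp [hx1, hx2]
    have hsub1 : insert ((a, b) : A × B) Pm ⊆ Pm' := by
      intro x hx
      rcases Finset.mem_insert.1 hx with rfl | hx
      · simp only [hPm', Finset.mem_filter]
        exact ⟨Finset.mem_univ _, hc₂₂, he.2⟩
      · simp only [hPm, Finset.mem_filter] at hx
        simp only [hPm', Finset.mem_filter]
        exact ⟨Finset.mem_univ _, h1 x hx.2.1 hx.2.2⟩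
    have hsub2 : insert ((a, b) : A × B) Nm' ⊆ Nm := by
      intro x hx
      rcases Finset.mem_insert.1 hx with rfl | hx
      · simp only [hNm, Finset.mem_filter]
        exact ⟨Finset.mem_univ _, he.1, hc₂₁⟩
      · simp only [hNm', Finset.mem_filter] at hx
        simp only [hNm, Finset.mem_filter]
        exact ⟨Finset.mem_univ _, h2 x hx.2.1 hx.2.2⟩
    have hmem1 : ((a, b) : A × B) ∉ Pm := by
      simp only [hPm, Finset.mem_filter]
      rintro ⟨-, hm, -⟩
      exact hc₂₁ hm
    have hmem2 : ((a, b) : A × B) ∉ Nm' := by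
      simp only [hNm', Finset.mem_filter]
      rintro ⟨-, hm, -⟩
      exact he.2 hm
    have hcard1 : Pm.card + 1 ≤ Pm'.card := by
      rw [← Finset.card_insert_of_notMem hmem1]
      exact Finset.card_le_card hsub1
    have hcard2 : Nm'.card + 1 ≤ Nm.card := by
      rw [← Finset.card_insert_of_notMem hmem2]
      exact Finset.card_le_card hsub2
    have e1 := hC c₁
    have e2 := hC c₂
    omega

end Phase2

section Phase1
variable {A B C : Type*} [Fintype A] [Fintype B] [Fintype C]
  [DecidableEq A] [DecidableEq B] [DecidableEq C]

lemma split2 {α : Type*} [Fintype α] [DecidableEq α] (f : α → ℕ) {x₁ x₂ : α} (h : x₁ ≠ x₂) :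
    ∑ z, f z = f x₁ + f x₂ + ∑ z ∈ (univ.erase x₁).erase x₂, f z := by
  have h1 := Finset.add_sum_erase univ f (Finset.mem_univ x₁)
  have h2 := Finset.add_sum_erase (univ.erase x₁) f
    (Finset.mem_erase.2 ⟨h.symm, Finset.mem_univ x₂⟩)
  omega

lemma sum_sum_lt (F F' : A → B → ℕ) (x₁ x₂ : A) (y₁ y₂ : B) (hx : x₁ ≠ x₂) (hy : y₁ ≠ y₂)
    (hoff : ∀ a b, (a ≠ x₁ ∧ a ≠ x₂) ∨ (b ≠ y₁ ∧ b ≠ y₂) → F' a b = F a b)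
    (hcell : F' x₁ y₁ + F' x₁ y₂ + F' x₂ y₁ + F' x₂ y₂
      < F x₁ y₁ + F x₁ y₂ + F x₂ y₁ + F x₂ y₂) :
    ∑ a, ∑ b, F' a b < ∑ a, ∑ b, F a b := by
  have o1 := split2 (fun a => ∑ b, F a b) hx
  have o2 := split2 (fun a => ∑ b, F' a b) hx
  have r1 := split2 (fun b => F x₁ b) hy
  have r2 := split2 (fun b => F' x₁ b) hy
  have r3 := split2 (fun b => F x₂ b) hy
  have r4 := split2 (fun b => F' x₂ b) hy
  have t0 : ∑ a ∈ (univ.erase x₁).erase x₂, (∑ b, F' a b)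
      = ∑ a ∈ (univ.erase x₁).erase x₂, (∑ b, F a b) := by
    apply Finset.sum_congr rfl
    intro a ha
    rw [Finset.mem_erase, Finset.mem_erase] at ha
    exact Finset.sum_congr rfl fun b _ => hoff a b (Or.inl ⟨ha.2.1, ha.1⟩)
  have t1 : ∑ b ∈ (univ.erase y₁).erase y₂, F' x₁ b
      = ∑ b ∈ (univ.erase y₁).erase y₂, F x₁ b := by
    apply Finset.sum_congr rfl
    intro b hb
    rw [Finset.mem_erase, Finset.mem_erase] at hb
    exact hoff x₁ b (Or.inr ⟨hb.2.1, hb.1⟩)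
  have t2 : ∑ b ∈ (univ.erase y₁).erase y₂, F' x₂ b
      = ∑ b ∈ (univ.erase y₁).erase y₂, F x₂ b := by
    apply Finset.sum_congr rfl
    intro b hb
    rw [Finset.mem_erase, Finset.mem_erase] at hb
    exact hoff x₂ b (Or.inr ⟨hb.2.1, hb.1⟩)
  omega

/-- total variation distance between the two AB-projections -/
def projDist (H₁ H₂ : Finset (A × B × C)) : ℕ :=
  ∑ a : A, ∑ b : B, ((projAB H₁ a b - projAB H₂ a b) + (projAB H₂ a b - projAB H₁ a b))

lemma projDist_comm (H₁ H₂ : Finset (A × B × C)) : projDist H₁ H₂ = projDist H₂ H₁ := by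
  unfold projDist
  apply Finset.sum_congr rfl
  intro a _
  apply Finset.sum_congr rfl
  intro b _
  omega

/-- perform an A-switch on `E` along a rectangle where the projection allows it -/
lemma proj_switch (E : Finset (A × B × C)) (x₁ x₂ : A) (y₁ y₂ : B) (l₁ l₂ : ℕ)
    (hx : x₁ ≠ x₂) (hy : y₁ ≠ y₂)
    (h11 : projAB E x₁ y₁ = l₁) (h21 : projAB E x₂ y₁ + 1 = l₁)
    (h22 : projAB E x₂ y₂ = l₂) (h12 : projAB E x₁ y₂ + 1 = l₂) :
    ∃ E', IsSwitch E E' ∧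
      projAB E' x₁ y₁ + 1 = l₁ ∧ projAB E' x₂ y₁ = l₁ ∧
      projAB E' x₂ y₂ + 1 = l₂ ∧ projAB E' x₁ y₂ = l₂ ∧
      (∀ a b, (a ≠ x₁ ∧ a ≠ x₂) ∨ (b ≠ y₁ ∧ b ≠ y₂) → projAB E' a b = projAB E a b) := by
  obtain ⟨c₁, hc₁m, hc₁n⟩ := exists_c_of_proj_lt E x₁ x₂ y₁ (by omega)
  obtain ⟨c₂, hc₂m, hc₂n⟩ := exists_c_of_proj_lt E x₂ x₁ y₂ (by omega)
  set E' := insert (x₂, y₁, c₁) (insert (x₁, y₂, c₂)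
    ((E.erase (x₁, y₁, c₁)).erase (x₂, y₂, c₂))) with hE'
  have hsw : IsSwitch E E' :=
    Or.inl ⟨x₁, x₂, y₁, c₁, y₂, c₂, hc₁m, hc₂m, hc₁n, hc₂n, rfl⟩
  have hne12 : ((x₁, y₁, c₁) : A × B × C) ≠ (x₂, y₂, c₂) := by
    rintro h; injection h with h' _; exact hx h'
  have hnf12 : ((x₂, y₁, c₁) : A × B × C) ≠ (x₁, y₂, c₂) := by
    rintro h; injection h with h' _; exact hx h'.symm
  have key : ∀ a b, projAB E' a b
      + (if x₁ = a ∧ y₁ = b then 1 else 0) + (if x₂ = a ∧ y₂ = b then 1 else 0)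
      = projAB E a b
      + (if x₂ = a ∧ y₁ = b then 1 else 0) + (if x₁ = a ∧ y₂ = b then 1 else 0) := by
    intro a b
    have := card_filter_update E (x₁, y₁, c₁) (x₂, y₂, c₂) (x₂, y₁, c₁) (x₁, y₂, c₂)
      (fun e => e.1 = a ∧ e.2.1 = b) hc₁m hc₂m hne12 hc₁n hc₂n hnf12
    rw [← hE'] at this
    unfold projAB
    simpa using this
  refine ⟨E', hsw, ?_, ?_, ?_, ?_, ?_⟩
  · have := key x₁ y₁
    simp [hx.symm, hy.symm] at this
    omega
  · have := key x₂ y₁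
    simp [hx, hy.symm] at this
    omega
  · have := key x₂ y₂
    simp [hx, hy] at this
    omega
  · have := key x₁ y₂
    simp [hx.symm, hy] at this
    omega
  · intro a b hab
    have := key a b
    have z1 : ¬(x₁ = a ∧ y₁ = b) := by rintro ⟨rfl, rfl⟩; tauto
    have z2 : ¬(x₂ = a ∧ y₂ = b) := by rintro ⟨rfl, rfl⟩; tauto
    have z3 : ¬(x₂ = a ∧ y₁ = b) := by rintro ⟨rfl, rfl⟩; tauto
    have z4 : ¬(x₁ = a ∧ y₂ = b) := by rintro ⟨rfl, rfl⟩; tauto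
    simp [z1, z2, z3, z4] at this
    omega

end Phase1

section Phase1b
variable {A B C : Type*} [Fintype A] [Fintype B] [Fintype C]
  [DecidableEq A] [DecidableEq B] [DecidableEq C]

/-- Core step of phase 1: a valid balanced rectangle switch on `H` strictly
decreases the projection distance to `G`, preserving the brackets. -/
lemma phase1_core (H G : Finset (A × B × C)) (L : B → ℕ)
    (hLH : ∀ b a, projAB H a b = L b ∨ projAB H a b + 1 = L b)
    (hLG : ∀ b a, projAB G a b = L b ∨ projAB G a b + 1 = L b)
    (x₁ x₂ : A) (y₁ y₂ : B) (hx : x₁ ≠ x₂) (hy : y₁ ≠ y₂)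
    (h11 : projAB H x₁ y₁ = L y₁) (h21 : projAB H x₂ y₁ + 1 = L y₁)
    (h22 : projAB H x₂ y₂ = L y₂) (h12 : projAB H x₁ y₂ + 1 = L y₂)
    (hstrict :
      ((projAB H x₁ y₁ - projAB G x₁ y₁) + (projAB G x₁ y₁ - projAB H x₁ y₁)) +
      ((projAB H x₁ y₂ - projAB G x₁ y₂) + (projAB G x₁ y₂ - projAB H x₁ y₂)) +
      ((projAB H x₂ y₁ - projAB G x₂ y₁) + (projAB G x₂ y₁ - projAB H x₂ y₁)) +
      ((projAB H x₂ y₂ - projAB G x₂ y₂) + (projAB G x₂ y₂ - projAB H x₂ y₂)) ≥ 3) :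
    ∃ K, IsSwitch H K ∧
      (∀ b a, projAB K a b = L b ∨ projAB K a b + 1 = L b) ∧
      projDist K G < projDist H G := by
  obtain ⟨K, hsw, v11, v21, v22, v12, hoff⟩ :=
    proj_switch H x₁ x₂ y₁ y₂ (L y₁) (L y₂) hx hy h11 h21 h22 h12
  refine ⟨K, hsw, ?_, ?_⟩
  · intro b a
    by_cases hb1 : b = y₁
    · subst hb1
      by_cases ha1 : a = x₁
      · subst ha1; right; exact v11
      · by_cases ha2 : a = x₂
        · subst ha2; left; exact v21
        · rw [hoff a _ (Or.inl ⟨ha1, ha2⟩)]; exact hLH _ a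
    · by_cases hb2 : b = y₂
      · subst hb2
        by_cases ha1 : a = x₁
        · subst ha1; left; exact v12
        · by_cases ha2 : a = x₂
          · subst ha2; right; exact v22
          · rw [hoff a _ (Or.inl ⟨ha1, ha2⟩)]; exact hLH _ a
      · rw [hoff a b (Or.inr ⟨hb1, hb2⟩)]; exact hLH b a
  · unfold projDist
    apply sum_sum_lt _ _ x₁ x₂ y₁ y₂ hx hy
    · intro a b hab
      rw [hoff a b hab]
    · have g11 := hLG y₁ x₁
      have g21 := hLG y₁ x₂
      have g12 := hLG y₂ x₁
      have g22 := hLG y₂ x₂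
      omega

end Phase1b

section Phase1c
variable {A B C : Type*} [Fintype A] [Fintype B] [Fintype C]
  [DecidableEq A] [DecidableEq B] [DecidableEq C]

lemma common_l (H₁ H₂ : Finset (A × B × C)) (b : B)
    (hB : hDegB H₁ b = hDegB H₂ b)
    (h1 : ∃ l, ∀ a, projAB H₁ a b = l ∨ projAB H₁ a b + 1 = l)
    (h2 : ∃ l, ∀ a, projAB H₂ a b = l ∨ projAB H₂ a b + 1 = l) :
    ∃ l, ∀ a, (projAB H₁ a b = l ∨ projAB H₁ a b + 1 = l) ∧
      (projAB H₂ a b = l ∨ projAB H₂ a b + 1 = l) := by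
  obtain ⟨l₁, hl₁⟩ := h1
  obtain ⟨l₂, hl₂⟩ := h2
  have hsum : ∑ a, projAB H₁ a b = ∑ a, projAB H₂ a b := by
    have := hB; rwa [hDegB_eq_sum, hDegB_eq_sum] at this
  rcases lt_trichotomy l₁ l₂ with h | h | h
  · have heq : ∀ a, projAB H₁ a b = projAB H₂ a b := by
      by_contra hc
      push_neg at hc
      obtain ⟨a₀, ha₀⟩ := hc
      have hle : ∀ a, projAB H₁ a b ≤ projAB H₂ a b := fun a => by
        have := hl₁ a; have := hl₂ a; omega
      have := Finset.sum_lt_sum (f := fun a => projAB H₁ a b)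
        (g := fun a => projAB H₂ a b) (fun i _ => hle i)
        ⟨a₀, Finset.mem_univ _, by have := hle a₀; omega⟩
      omega
    exact ⟨l₂, fun a => by have := hl₂ a; have := heq a; omega⟩
  · exact ⟨l₁, fun a => ⟨hl₁ a, h ▸ hl₂ a⟩⟩
  · have heq : ∀ a, projAB H₁ a b = projAB H₂ a b := by
      by_contra hc
      push_neg at hc
      obtain ⟨a₀, ha₀⟩ := hc
      have hle : ∀ a, projAB H₂ a b ≤ projAB H₁ a b := fun a => by
        have := hl₁ a; have := hl₂ a; omega
      have := Finset.sum_lt_sum (f := fun a => projAB H₂ a b)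
        (g := fun a => projAB H₁ a b) (fun i _ => hle i)
        ⟨a₀, Finset.mem_univ _, by have := hle a₀; omega⟩
      omega
    exact ⟨l₁, fun a => by have := hl₁ a; have := heq a; omega⟩

lemma phase1_rec (n : ℕ) : ∀ H₁ H₂ : Finset (A × B × C),
    (∀ a, hDegA H₁ a = hDegA H₂ a) → (∀ b, hDegB H₁ b = hDegB H₂ b) →
    (∀ c, hDegC H₁ c = hDegC H₂ c) →
    (∀ b, ∃ l, ∀ a, (projAB H₁ a b = l ∨ projAB H₁ a b + 1 = l) ∧
      (projAB H₂ a b = l ∨ projAB H₂ a b + 1 = l)) →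
    projDist H₁ H₂ = n → Relation.ReflTransGen IsSwitch H₁ H₂ := by
  induction n using Nat.strong_induction_on with
  | _ n IH =>
  intro H₁ H₂ hA hB hC CB hn
  by_cases hproj : ∀ a b, projAB H₁ a b = projAB H₂ a b
  · exact phase2 _ H₁ H₂ rfl hproj hC
  · push_neg at hproj
    obtain ⟨a₀, b₀, hne0⟩ := hproj
    choose L hL using CB
    have hLH : ∀ b a, projAB H₁ a b = L b ∨ projAB H₁ a b + 1 = L b := fun b a => (hL b a).1
    have hLG : ∀ b a, projAB H₂ a b = L b ∨ projAB H₂ a b + 1 = L b := fun b a => (hL b a).2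
    have colsum : ∀ b, ∑ a, projAB H₁ a b = ∑ a, projAB H₂ a b := fun b => by
      have := hB b; rwa [hDegB_eq_sum, hDegB_eq_sum] at this
    have rowsum : ∀ a, ∑ b, projAB H₁ a b = ∑ b, projAB H₂ a b := fun a => by
      have := hA a; rwa [hDegA_eq_sum, hDegA_eq_sum] at this
    have hex1 : ∃ a₁, projAB H₁ a₁ b₀ = projAB H₂ a₁ b₀ + 1 := by
      by_contra hc
      push_neg at hc
      have hle : ∀ a, projAB H₁ a b₀ ≤ projAB H₂ a b₀ := fun a => by
        have := hL b₀ a; have := hc a; omega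
      have := Finset.sum_lt_sum (f := fun a => projAB H₁ a b₀)
        (g := fun a => projAB H₂ a b₀) (fun i _ => hle i)
        ⟨a₀, Finset.mem_univ _, by have := hle a₀; omega⟩
      have := colsum b₀
      omega
    obtain ⟨a₁, ha₁⟩ := hex1
    have hex2 : ∃ b₂, projAB H₂ a₁ b₂ = projAB H₁ a₁ b₂ + 1 := by
      by_contra hc
      push_neg at hc
      have hle : ∀ b, projAB H₂ a₁ b ≤ projAB H₁ a₁ b := fun b => by
        have := hL b a₁; have := hc b; omega
      have := Finset.sum_lt_sum (f := fun b => projAB H₂ a₁ b)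
        (g := fun b => projAB H₁ a₁ b) (fun i _ => hle i)
        ⟨b₀, Finset.mem_univ _, by omega⟩
      have := rowsum a₁
      omega
    obtain ⟨b₂, hb₂⟩ := hex2
    have hbne : b₀ ≠ b₂ := fun h => by rw [← h] at hb₂; omega
    have k11 : projAB H₁ a₁ b₀ = L b₀ := by have := hL b₀ a₁; omega
    have k11' : projAB H₂ a₁ b₀ + 1 = L b₀ := by have := hL b₀ a₁; omega
    have k12 : projAB H₁ a₁ b₂ + 1 = L b₂ := by have := hL b₂ a₁; omega
    have k12' : projAB H₂ a₁ b₂ = L b₂ := by have := hL b₂ a₁; omega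
    by_cases hgood : ∃ a₂, projAB H₁ a₂ b₂ = projAB H₂ a₂ b₂ + 1 ∧
        (projAB H₁ a₂ b₀ + 1 = L b₀ ∨
          (projAB H₁ a₂ b₀ = L b₀ ∧ projAB H₂ a₂ b₀ = L b₀))
    · obtain ⟨a₂, ha₂, hcase⟩ := hgood
      have hane : a₁ ≠ a₂ := fun h => by rw [← h] at ha₂; omega
      have k22 : projAB H₁ a₂ b₂ = L b₂ := by have := hL b₂ a₂; omega
      have k22' : projAB H₂ a₂ b₂ + 1 = L b₂ := by have := hL b₂ a₂; omega
      rcases hcase with hA2 | ⟨hB1, hB2⟩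
      · -- case A : switch on H₁
        obtain ⟨K, hsw, hLK, hdec⟩ := phase1_core H₁ H₂ L hLH hLG a₁ a₂ b₀ b₂ hane hbne
          k11 hA2 k22 k12 (by have := hL b₀ a₂; omega)
        exact Relation.ReflTransGen.head hsw
          (IH _ (hn ▸ hdec) K H₂
            (fun a => (isSwitch_degA hsw a).trans (hA a))
            (fun b => (isSwitch_degB hsw b).trans (hB b))
            (fun c => (isSwitch_degC hsw c).trans (hC c))
            (fun b => ⟨L b, fun a => ⟨hLK b a, hLG b a⟩⟩) rfl)
      · -- case B : switch on H₂
        obtain ⟨K, hsw, hLK, hdec⟩ := phase1_core H₂ H₁ L hLG hLH a₂ a₁ b₀ b₂ hane.symm hbne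
          hB2 k11' k12' k22' (by omega)
        have hlt : projDist H₁ K < n := by
          have e1 := projDist_comm H₁ K
          have e2 := projDist_comm H₂ H₁
          omega
        exact Relation.ReflTransGen.tail
          (IH _ hlt H₁ K
            (fun a => (hA a).trans (isSwitch_degA hsw a).symm)
            (fun b => (hB b).trans (isSwitch_degB hsw b).symm)
            (fun c => (hC c).trans (isSwitch_degC hsw c).symm)
            (fun b => ⟨L b, fun a => ⟨hLH b a, hLK b a⟩⟩) rfl)
          (isSwitch_symm hsw)
    · -- bad case : counting argument produces a third row a₃
      have hbad : ∀ a, projAB H₁ a b₂ = projAB H₂ a b₂ + 1 →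
          (projAB H₁ a b₀ = L b₀ ∧ projAB H₂ a b₀ + 1 = L b₀) := by
        intro a hsign
        have hg : ¬(projAB H₁ a b₀ + 1 = L b₀ ∨
            (projAB H₁ a b₀ = L b₀ ∧ projAB H₂ a b₀ = L b₀)) :=
          fun hcon => hgood ⟨a, hsign, hcon⟩
        have := hL b₀ a
        omega
      classical
      set Up := univ.filter (fun a => projAB H₁ a b₀ = projAB H₂ a b₀ + 1) with hUp
      set Un := univ.filter (fun a => projAB H₂ a b₀ = projAB H₁ a b₀ + 1) with hUn
      set Tp := univ.filter (fun a => projAB H₁ a b₂ = projAB H₂ a b₂ + 1) with hTp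
      set Tn := univ.filter (fun a => projAB H₂ a b₂ = projAB H₁ a b₂ + 1) with hTn
      have cardU : Up.card = Un.card := by
        have hpt : ∀ a ∈ univ, projAB H₁ a b₀
            + (if projAB H₂ a b₀ = projAB H₁ a b₀ + 1 then 1 else 0)
            = projAB H₂ a b₀
            + (if projAB H₁ a b₀ = projAB H₂ a b₀ + 1 then 1 else 0) := fun a _ => by
          have := hL b₀ a; split_ifs <;> omega
        have hsum := Finset.sum_congr rfl hpt
        rw [Finset.sum_add_distrib, Finset.sum_add_distrib] at hsum
        rw [hUp, hUn, Finset.card_filter, Finset.card_filter]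
        have hc := colsum b₀
        omega
      have cardT : Tp.card = Tn.card := by
        have hpt : ∀ a ∈ univ, projAB H₁ a b₂
            + (if projAB H₂ a b₂ = projAB H₁ a b₂ + 1 then 1 else 0)
            = projAB H₂ a b₂
            + (if projAB H₁ a b₂ = projAB H₂ a b₂ + 1 then 1 else 0) := fun a _ => by
          have := hL b₂ a; split_ifs <;> omega
        have hsum := Finset.sum_congr rfl hpt
        rw [Finset.sum_add_distrib, Finset.sum_add_distrib] at hsum
        rw [hTp, hTn, Finset.card_filter, Finset.card_filter]
        have hc := colsum b₂
        omega
      have hsubTU : Tp ⊆ Up := by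
        intro a ha
        rw [hTp, Finset.mem_filter] at ha
        rw [hUp, Finset.mem_filter]
        have := hbad a ha.2
        exact ⟨Finset.mem_univ _, by omega⟩
      have ha₁U : a₁ ∈ Up := by
        rw [hUp, Finset.mem_filter]; exact ⟨Finset.mem_univ _, ha₁⟩
      have ha₁T : a₁ ∉ Tp := by
        rw [hTp, Finset.mem_filter]; rintro ⟨-, h⟩; omega
      have hcardUT : Tp.card + 1 ≤ Up.card := by
        have : insert a₁ Tp ⊆ Up := by
          intro x hx
          rcases Finset.mem_insert.1 hx with rfl | hx
          · exact ha₁U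
          · exact hsubTU hx
        have := Finset.card_le_card this
        rwa [Finset.card_insert_of_notMem ha₁T] at this
      have hnotsub : ¬ Un ⊆ Tn := fun h => by
        have := Finset.card_le_card h; omega
      obtain ⟨a₃, h3U, h3T⟩ := Finset.not_subset.1 hnotsub
      rw [hUn, Finset.mem_filter] at h3U
      rw [hTn, Finset.mem_filter] at h3T
      have h3U' := h3U.2
      have h3T' : ¬ projAB H₂ a₃ b₂ = projAB H₁ a₃ b₂ + 1 :=
        fun h => h3T ⟨Finset.mem_univ _, h⟩
      have k31 : projAB H₁ a₃ b₀ + 1 = L b₀ := by have := hL b₀ a₃; omega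
      have k31' : projAB H₂ a₃ b₀ = L b₀ := by have := hL b₀ a₃; omega
      have h3Tp : ¬ projAB H₁ a₃ b₂ = projAB H₂ a₃ b₂ + 1 := by
        intro h
        have := hbad a₃ h
        omega
      have heq3 : projAB H₁ a₃ b₂ = projAB H₂ a₃ b₂ := by have := hL b₂ a₃; omega
      have hane3 : a₁ ≠ a₃ := fun h => by rw [← h] at k31; omega
      by_cases hv : projAB H₁ a₃ b₂ = L b₂
      · -- case C1 : switch on H₁ along (a₁, a₃, b₀, b₂)
        obtain ⟨K, hsw, hLK, hdec⟩ := phase1_core H₁ H₂ L hLH hLG a₁ a₃ b₀ b₂ hane3 hbne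
          k11 k31 hv k12 (by omega)
        exact Relation.ReflTransGen.head hsw
          (IH _ (hn ▸ hdec) K H₂
            (fun a => (isSwitch_degA hsw a).trans (hA a))
            (fun b => (isSwitch_degB hsw b).trans (hB b))
            (fun c => (isSwitch_degC hsw c).trans (hC c))
            (fun b => ⟨L b, fun a => ⟨hLK b a, hLG b a⟩⟩) rfl)
      · -- case C2 : switch on H₂ along (a₁, a₃, b₂, b₀)
        have hv2 : projAB H₂ a₃ b₂ + 1 = L b₂ := by have := hL b₂ a₃; omega
        obtain ⟨K, hsw, hLK, hdec⟩ := phase1_core H₂ H₁ L hLG hLH a₁ a₃ b₂ b₀ hane3 hbne.symm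
          k12' hv2 k31' k11' (by omega)
        have hlt : projDist H₁ K < n := by
          have e1 := projDist_comm H₁ K
          have e2 := projDist_comm H₂ H₁
          omega
        exact Relation.ReflTransGen.tail
          (IH _ hlt H₁ K
            (fun a => (hA a).trans (isSwitch_degA hsw a).symm)
            (fun b => (hB b).trans (isSwitch_degB hsw b).symm)
            (fun c => (hC c).trans (isSwitch_degC hsw c).symm)
            (fun b => ⟨L b, fun a => ⟨hLH b a, hLK b a⟩⟩) rfl)
          (isSwitch_symm hsw)

end Phase1c


/-- any two `B`-balanced realizations `H₁`, `H₂` of the same third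
almost-regular degree sequence `D = (D_A, D_B, D_C)` can be transformed into each
other by a finite series of switch operations. -/
theorem balanced_realizations_switch_connected
    (dA : A → ℕ) (dB : B → ℕ) (dC : C → ℕ) (k : ℕ)
    (hreg : ∀ a : A, dA a = k ∨ dA a + 1 = k)
    (H₁ H₂ : Finset (A × B × C))
    (hH₁A : ∀ a, hDegA H₁ a = dA a) (hH₁B : ∀ b, hDegB H₁ b = dB b)
    (hH₁C : ∀ c, hDegC H₁ c = dC c)
    (hH₂A : ∀ a, hDegA H₂ a = dA a) (hH₂B : ∀ b, hDegB H₂ b = dB b)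
    (hH₂C : ∀ c, hDegC H₂ c = dC c)
    (hbal₁ : BBalanced H₁) (hbal₂ : BBalanced H₂) :
    Relation.ReflTransGen IsSwitch H₁ H₂ := by
  have hA' : ∀ a, hDegA H₁ a = hDegA H₂ a := fun a => (hH₁A a).trans (hH₂A a).symm
  have hB' : ∀ b, hDegB H₁ b = hDegB H₂ b := fun b => (hH₁B b).trans (hH₂B b).symm
  have hC' : ∀ c, hDegC H₁ c = hDegC H₂ c := fun c => (hH₁C c).trans (hH₂C c).symm
  exact phase1_rec (projDist H₁ H₂) H₁ H₂ hA' hB' hC'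
    (fun b => common_l H₁ H₂ b (hB' b) (hbal₁ b) (hbal₂ b)) rfl
end

section
/- Let M₁ and M₂ be the adjacency matrices of two B-balanced (A,B)-projections of two partite 3-uniform hypergraphs H₁ and H₂ realizing the same degree sequence D = (D_A, D_B, D_C), and let G₁ and G₂ be their traces. Then G₁ and G₂ are bipartite simple graphs with the same degree sequences: for each column (vertex b ∈ B), the number of 1s in that column of the trace is the same in G₁ and G₂, and for each row (vertex a ∈ A), the number of 1s in that row of the trace is the same in G₁ and G₂. -/
open Finset

variable {A B C : Type*} [Fintype A] [Fintype B] [Fintype C]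
  [DecidableEq A] [DecidableEq B] [DecidableEq C]

/-- The entry of the trace at `(a,b)`: it is `1` iff the adjacency-matrix entry of the
`(A,B)`-projection at `(a,b)` equals the column ceiling `l b = ⌈d(b)/|A|⌉`. -/
def traceEntry (E : Finset (A × B × C)) (l : B → ℕ) (a : A) (b : B) : ℕ :=
  if projAB E a b = l b then 1 else 0

lemma sum_projAB_col (E : Finset (A × B × C)) (b : B) :
    ∑ a : A, projAB E a b = hDegB E b := by
  classical
  unfold projAB hDegB
  rw [Finset.card_eq_sum_card_fiberwise (f := fun e => e.1) (t := Finset.univ)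
    (fun e _ => mem_univ _)]
  apply Finset.sum_congr rfl
  intro a _
  rw [Finset.filter_filter]
  congr 1
  apply Finset.filter_congr
  intro e _
  tauto

lemma sum_projAB_row (E : Finset (A × B × C)) (a : A) :
    ∑ b : B, projAB E a b = hDegA E a := by
  classical
  unfold projAB hDegA
  rw [Finset.card_eq_sum_card_fiberwise (f := fun e => e.2.1) (t := Finset.univ)
    (fun e _ => mem_univ _)]
  apply Finset.sum_congr rfl
  intro b _
  rw [Finset.filter_filter]

lemma key_lemma (E : Finset (A × B × C)) [Nonempty A] (hbal : BBalanced E) (b : B)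
    (l : ℕ) (hl : l = (hDegB E b + Fintype.card A - 1) / Fintype.card A) :
    ∀ a : A, projAB E a b = l ∨ projAB E a b + 1 = l := by
  classical
  obtain ⟨m, hm⟩ := hbal b
  have hn : 0 < Fintype.card A := Fintype.card_pos
  set n := Fintype.card A with hndef
  rcases Nat.eq_zero_or_pos m with hm0 | hmpos
  · -- m = 0 : all entries zero
    have hz : ∀ a, projAB E a b = 0 := by
      intro a; rcases hm a with h | h <;> omega
    have hS : hDegB E b = 0 := by
      rw [← sum_projAB_col]; exact Finset.sum_eq_zero fun a _ => hz a
    intro a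
    left
    rw [hz a, hl, hS, zero_add, Nat.div_eq_of_lt (by omega)]
  · obtain ⟨m', rfl⟩ : ∃ m', m = m' + 1 := ⟨m - 1, by omega⟩
    set s := Finset.univ.filter (fun a : A => projAB E a b = m' + 1) with hs
    set k := s.card with hk
    have hk_le : k ≤ n := by
      calc k ≤ (Finset.univ : Finset A).card := Finset.card_filter_le _ _
        _ = n := by simp [hndef]
    have hS : hDegB E b = n * m' + k := by
      rw [← sum_projAB_col,
        ← Finset.sum_filter_add_sum_filter_not Finset.univ
          (fun a : A => projAB E a b = m' + 1) (fun a => projAB E a b)]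
      have h1 : ∑ a ∈ s, projAB E a b = k * (m' + 1) := by
        rw [Finset.sum_congr rfl (fun a ha => (Finset.mem_filter.mp ha).2)]
        simp [hk, hs, mul_comm]
      have h2 : ∑ a ∈ Finset.univ.filter (fun a : A => ¬ projAB E a b = m' + 1),
          projAB E a b = (n - k) * m' := by
        rw [Finset.sum_congr rfl (fun a ha => ?_)]
        · rw [Finset.sum_const, smul_eq_mul]
          congr 1
          rw [Finset.filter_not, Finset.card_sdiff_of_subset (Finset.filter_subset _ _)]
          simp [hk, hs, hndef]
        · have hna := (Finset.mem_filter.mp ha).2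
          rcases hm a with h | h
          · exact absurd h hna
          · omega
      rw [h1, h2]
      have : (n - k) * m' = n * m' - k * m' := by
        rw [Nat.sub_mul]
      rw [this, Nat.mul_succ]
      have hkm : k * m' ≤ n * m' := Nat.mul_le_mul_right _ hk_le
      omega
    rcases Nat.eq_zero_or_pos k with hk0 | hkpos
    · -- all entries equal m'
      have hall : ∀ a, projAB E a b = m' := by
        intro a
        have hna : a ∉ s := by rw [hk0] at hk; simp [Finset.card_eq_zero.mp hk.symm]
        rcases hm a with h | h
        · exact absurd (Finset.mem_filter.mpr ⟨Finset.mem_univ a, h⟩) hna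
        · omega
      have hleq : l = m' := by
        rw [hl, hS, hk0, add_zero]
        have : n * m' + n - 1 = (n - 1) + m' * n := by
          rw [mul_comm]; omega
        rw [this, Nat.add_mul_div_right _ _ hn, Nat.div_eq_of_lt (by omega), zero_add]
      intro a
      left
      rw [hall a, hleq]
    · -- l = m' + 1
      have hleq : l = m' + 1 := by
        rw [hl, hS]
        have : n * m' + k + n - 1 = (k - 1) + (m' + 1) * n := by
          rw [add_mul, one_mul, mul_comm]; omega
        rw [this, Nat.add_mul_div_right _ _ hn, Nat.div_eq_of_lt (by omega), zero_add]
      rw [hleq]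
      exact hm

lemma trace_eq_int (E : Finset (A × B × C)) [Nonempty A] (hbal : BBalanced E)
    (l : B → ℕ) (hl : ∀ b, l b = (hDegB E b + Fintype.card A - 1) / Fintype.card A)
    (a : A) (b : B) :
    (traceEntry E l a b : ℤ) = (projAB E a b : ℤ) + 1 - l b := by
  have key := key_lemma E hbal b (l b) (hl b)
  unfold traceEntry
  rcases key a with h | h
  · rw [if_pos h, h]; ring
  · rw [if_neg (by omega)]
    have : (projAB E a b : ℤ) + 1 = l b := by exact_mod_cast h
    omega

theorem aux_traces [Nonempty A]
    (dA : A → ℕ) (dB : B → ℕ) (dC : C → ℕ)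
    (H₁ H₂ : Finset (A × B × C))
    (hH₁A : ∀ a, hDegA H₁ a = dA a) (hH₁B : ∀ b, hDegB H₁ b = dB b)
    (hH₂A : ∀ a, hDegA H₂ a = dA a) (hH₂B : ∀ b, hDegB H₂ b = dB b)
    (hbal₁ : BBalanced H₁) (hbal₂ : BBalanced H₂)
    (l : B → ℕ)
    (hl : ∀ b, l b = (dB b + Fintype.card A - 1) / Fintype.card A) :
    (∀ b : B, ∑ a : A, traceEntry H₁ l a b = ∑ a : A, traceEntry H₂ l a b) ∧
    (∀ a : A, ∑ b : B, traceEntry H₁ l a b = ∑ b : B, traceEntry H₂ l a b) := by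
  have hl₁ : ∀ b, l b = (hDegB H₁ b + Fintype.card A - 1) / Fintype.card A := by
    intro b; rw [hH₁B b]; exact hl b
  have hl₂ : ∀ b, l b = (hDegB H₂ b + Fintype.card A - 1) / Fintype.card A := by
    intro b; rw [hH₂B b]; exact hl b
  constructor
  · intro b
    have e1 : (∑ a : A, traceEntry H₁ l a b : ℤ) = (∑ a : A, traceEntry H₂ l a b : ℤ) := by
      push_cast
      rw [Finset.sum_congr rfl fun a _ => trace_eq_int H₁ hbal₁ l hl₁ a b,
        Finset.sum_congr rfl fun a _ => trace_eq_int H₂ hbal₂ l hl₂ a b]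
      have h1 : (∑ a : A, (projAB H₁ a b : ℤ)) = ∑ a : A, (projAB H₂ a b : ℤ) := by
        rw [← Nat.cast_sum, ← Nat.cast_sum, sum_projAB_col, sum_projAB_col, hH₁B, hH₂B]
      rw [Finset.sum_sub_distrib, Finset.sum_sub_distrib,
        Finset.sum_add_distrib, Finset.sum_add_distrib, h1]
    exact_mod_cast e1
  · intro a
    have e1 : (∑ b : B, traceEntry H₁ l a b : ℤ) = (∑ b : B, traceEntry H₂ l a b : ℤ) := by
      push_cast
      rw [Finset.sum_congr rfl fun b _ => trace_eq_int H₁ hbal₁ l hl₁ a b,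
        Finset.sum_congr rfl fun b _ => trace_eq_int H₂ hbal₂ l hl₂ a b]
      have h1 : (∑ b : B, (projAB H₁ a b : ℤ)) = ∑ b : B, (projAB H₂ a b : ℤ) := by
        rw [← Nat.cast_sum, ← Nat.cast_sum, sum_projAB_row, sum_projAB_row, hH₁A, hH₂A]
      rw [Finset.sum_sub_distrib, Finset.sum_sub_distrib,
        Finset.sum_add_distrib, Finset.sum_add_distrib, h1]
    exact_mod_cast e1


/-- if `H₁`, `H₂` are partite 3-uniform hypergraphs realizing the same
degree sequence `D = (D_A, D_B, D_C)` whose `(A,B)`-projections are `B`-balanced, then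
the traces `G₁`, `G₂` of these projections (with column ceilings `l b = ⌈d(b)/|A|⌉`)
have the same degree sequences: every column has the same number of `1`s in both
traces, and every row has the same number of `1`s in both traces. -/
theorem traces_same_degree_sequence [Nonempty A]
    (dA : A → ℕ) (dB : B → ℕ) (dC : C → ℕ)
    (H₁ H₂ : Finset (A × B × C))
    (hH₁A : ∀ a, hDegA H₁ a = dA a) (hH₁B : ∀ b, hDegB H₁ b = dB b)
    (hH₁C : ∀ c, hDegC H₁ c = dC c)
    (hH₂A : ∀ a, hDegA H₂ a = dA a) (hH₂B : ∀ b, hDegB H₂ b = dB b)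
    (hH₂C : ∀ c, hDegC H₂ c = dC c)
    (hbal₁ : BBalanced H₁) (hbal₂ : BBalanced H₂)
    (l : B → ℕ)
    (hl : ∀ b, l b = (dB b + Fintype.card A - 1) / Fintype.card A) :
    (∀ b : B, ∑ a : A, traceEntry H₁ l a b = ∑ a : A, traceEntry H₂ l a b) ∧
    (∀ a : A, ∑ b : B, traceEntry H₁ l a b = ∑ b : B, traceEntry H₂ l a b) := by
  exact aux_traces dA dB dC H₁ H₂ hH₁A hH₁B hH₂A hH₂B hbal₁ hbal₂ l hl
end
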